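/- Let f be an affine function on [a', b'] ⊂ ℝ, γ ≥ 0, ε ≥ γ, and t ∈ [a', b']. Suppose h is a convex function with h(x) ≤ f(x) + γ for all x ∈ [a', b'] and h(t) ≤ f(t) - 2ε. Then there exists a subinterval [a'', b''] ⊆ [a', b'] of length at least (b' - a')/3 on which h(x) ≤ f(x) - ε for all x. -/
import Mathlib


theorem convex_below_affine_on_subinterval
    (a' b' : ℝ) (hab : a' < b')
    (c₀ c₁ : ℝ) (f : ℝ → ℝ) (hf : ∀ x, f x = c₀ + c₁ * x)
    (γ ε : ℝ) (hγ : 0 ≤ γ) (hε : γ ≤ ε)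
    (t : ℝ) (ht : t ∈ Set.Icc a' b')
    (h : ℝ → ℝ) (hconv : ConvexOn ℝ (Set.Icc a' b') h)
    (hub : ∀ x ∈ Set.Icc a' b', h x ≤ f x + γ)
    (hlt : h t ≤ f t - 2 * ε) :
    ∃ a'' b'', a' ≤ a'' ∧ b'' ≤ b' ∧ (b' - a') / 3 ≤ b'' - a'' ∧
      ∀ x ∈ Set.Icc a'' b'', h x ≤ f x - ε := by
  have hε0 : (0:ℝ) ≤ ε := le_trans hγ hε
  obtain ⟨hta, htb⟩ := ht
  refine ⟨(2*t + a')/3, (2*t + b')/3, by linarith, by linarith, by linarith, ?_⟩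
  rintro x ⟨hx1, hx2⟩
  have hta' : a' ∈ Set.Icc a' b' := ⟨le_refl _, le_of_lt hab⟩
  have htb' : b' ∈ Set.Icc a' b' := ⟨le_of_lt hab, le_refl _⟩
  have htm : t ∈ Set.Icc a' b' := ⟨hta, htb⟩
  rcases le_or_gt x t with hxt | hxt
  · rcases eq_or_lt_of_le hta with heq | hlt'
    · have hxeq : x = t := le_antisymm hxt (by rw [← heq]; linarith)
      rw [hxeq]; linarith
    · have hne : t - a' ≠ 0 := sub_ne_zero.mpr (ne_of_gt hlt')
      set l : ℝ := (t - x)/(t - a') with hl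
      have hl0 : (0:ℝ) ≤ l := div_nonneg (by linarith) (by linarith)
      have hl13 : l ≤ 1/3 := by
        rw [hl, div_le_iff₀ (by linarith)]; linarith
      have hx_eq : l * a' + (1-l) * t = x := by
        rw [hl]; field_simp; ring
      have h2 := hconv.2 hta' htm hl0 (by linarith : (0:ℝ) ≤ 1 - l)
        (by ring : l + (1-l) = 1)
      simp only [smul_eq_mul] at h2
      rw [hx_eq] at h2
      have hub' := hub a' hta'
      have hfx : f x = l * f a' + (1-l) * f t := by
        rw [hf, hf, hf, ← hx_eq]; ring
      nlinarith [mul_nonneg hl0 hε0]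
  · have hbt : t < b' := lt_of_lt_of_le hxt (by linarith)
    have hne : b' - t ≠ 0 := sub_ne_zero.mpr (ne_of_gt hbt)
    set l : ℝ := (x - t)/(b' - t) with hl
    have hl0 : (0:ℝ) ≤ l := div_nonneg (by linarith) (by linarith)
    have hl13 : l ≤ 1/3 := by
      rw [hl, div_le_iff₀ (by linarith)]; linarith
    have hx_eq : l * b' + (1-l) * t = x := by
      rw [hl]; field_simp; ring
    have h2 := hconv.2 htb' htm hl0 (by linarith : (0:ℝ) ≤ 1 - l)
      (by ring : l + (1-l) = 1)
    simp only [smul_eq_mul] at h2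
    rw [hx_eq] at h2
    have hub' := hub b' htb'
    have hfx : f x = l * f b' + (1-l) * f t := by
      rw [hf, hf, hf, ← hx_eq]; ring
    nlinarith [mul_nonneg hl0 hε0]
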